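/- Fix an integer d ≥ 1, T > 0, and constants C₀, c₀ > 0. Let K(x,t;ξ,τ) be a measurable function defined for x, ξ ∈ ℝ^d and 0 ≤ τ < t ≤ T satisfying |K(x,t;ξ,τ)| ≤ C₀ (t−τ)^{−(d+1)/2} exp(−c₀‖x−ξ‖²/(t−τ)). Define recursively K₁ = K and K_{m+1}(x,t;ξ,τ) = ∫_τ^t ∫_{ℝ^d} K(x,t;η,s) K_m(η,s;ξ,τ) dη ds. Then for every integer m ≥ 1 there exist constants B_m, c_m > 0, depending only on m, d, T, C₀ and c₀, such that |K_m(x,t;ξ,τ)| ≤ B_m (t−τ)^{−(d+2−m)/2} exp(−c_m‖x−ξ‖²/(t−τ)) for all x, ξ ∈ ℝ^d and 0 ≤ τ < t ≤ T. -/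

import Mathlib

open MeasureTheory Real

abbrev Vd (d : ℕ) := EuclideanSpace ℝ (Fin d)

lemma gauss_base (d : ℕ) {k : ℝ} (hk : 0 < k) :
    Integrable (fun η : Vd d => Real.exp (-(k * ‖η‖ ^ 2))) := by
  have h := (GaussianFourier.integrable_cexp_neg_mul_sq_norm_add (V := Vd d)
    (b := (k : ℂ)) (by simpa using hk) 0 0).norm
  convert h using 2 with v
  simp only [zero_mul, add_zero, Complex.norm_exp]
  congr 1
  simp only [Complex.mul_re, Complex.neg_re, Complex.ofReal_re, Complex.neg_im,
    Complex.ofReal_im, neg_zero, zero_mul, sub_zero]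
  rw [← Complex.ofReal_pow, Complex.ofReal_re]
  ring

lemma gauss_integrable (d : ℕ) {k : ℝ} (hk : 0 < k) (z : Vd d) :
    Integrable (fun η : Vd d => Real.exp (-(k * ‖η - z‖ ^ 2))) := by
  have h := (gauss_base d hk).comp_sub_left z
  convert h using 2 with η
  rw [norm_sub_rev]

lemma gauss_integral (d : ℕ) {k : ℝ} (hk : 0 < k) (z : Vd d) :
    ∫ η : Vd d, Real.exp (-(k * ‖η - z‖ ^ 2)) = (Real.pi / k) ^ ((d : ℝ) / 2) := by
  have h1 : ∫ η : Vd d, Real.exp (-(k * ‖η - z‖ ^ 2))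
      = ∫ η : Vd d, Real.exp (-(k * ‖z - η‖ ^ 2)) := by
    congr 1 with η; rw [norm_sub_rev]
  rw [h1, integral_sub_left_eq_self (fun u : Vd d => Real.exp (-(k * ‖u‖ ^ 2))) volume z]
  have := GaussianFourier.integral_rexp_neg_mul_sq_norm (V := Vd d) hk
  simp only [neg_mul] at this ⊢
  rw [this, finrank_euclideanSpace_fin]

lemma key_ineq (a b u v w : ℝ) (ha : 0 < a) (hb : 0 < b) (hu : 0 ≤ u) (hv : 0 ≤ v)
    (hw : 0 ≤ w) (htri : w ≤ u + v) :
    a * b / (a + b) * w ^ 2 ≤ a * u ^ 2 + b * v ^ 2 := by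
  rw [div_mul_eq_mul_div, div_le_iff₀ (by positivity)]
  have h1 : w ^ 2 ≤ (u + v) ^ 2 := by nlinarith
  nlinarith [sq_nonneg (a * u - b * v), mul_pos ha hb,
    mul_le_mul_of_nonneg_left h1 (mul_pos ha hb).le]

lemma expo_ineq (c₀ c ts sτ δ u v w : ℝ) (hc₀ : 0 < c₀) (hc : 0 < c)
    (hts : 0 < ts) (hsτ : 0 < sτ) (hts' : ts ≤ δ) (hsτ' : sτ ≤ δ)
    (hu : 0 ≤ u) (hv : 0 ≤ v) (hw : 0 ≤ w) (htri : w ≤ u + v) :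
    c₀ * c / (2 * (c₀ + c)) * w ^ 2 / δ + c / (2 * sτ) * v ^ 2
      ≤ c₀ * u ^ 2 / ts + c * v ^ 2 / sτ := by
  have hδ : 0 < δ := lt_of_lt_of_le hts hts'
  have h1 : c₀ * (c / 2) / (c₀ + c / 2) * w ^ 2 ≤ c₀ * u ^ 2 + (c / 2) * v ^ 2 :=
    key_ineq c₀ (c / 2) u v w hc₀ (by positivity) hu hv hw htri
  have h2 : c₀ * c / (2 * (c₀ + c)) ≤ c₀ * (c / 2) / (c₀ + c / 2) := by
    rw [div_le_div_iff₀ (by positivity) (by positivity)]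
    nlinarith [mul_pos hc₀ hc, sq_nonneg c₀]
  have h3 : c₀ * c / (2 * (c₀ + c)) * w ^ 2 / δ ≤ (c₀ * u ^ 2 + (c / 2) * v ^ 2) / δ := by
    gcongr
    exact le_trans (mul_le_mul_of_nonneg_right h2 (sq_nonneg w)) h1
  have h4 : c₀ * u ^ 2 / δ ≤ c₀ * u ^ 2 / ts := by
    apply div_le_div_of_nonneg_left (by positivity) hts hts'
  have h5 : (c / 2) * v ^ 2 / δ ≤ (c / 2) * v ^ 2 / sτ := by
    apply div_le_div_of_nonneg_left (by positivity) hsτ hsτ'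
  have h6 : c / (2 * sτ) * v ^ 2 = c * v ^ 2 / sτ - (c / 2) * v ^ 2 / sτ := by
    field_simp; ring
  have h7 : (c₀ * u ^ 2 + (c / 2) * v ^ 2) / δ = c₀ * u ^ 2 / δ + (c / 2) * v ^ 2 / δ := by
    ring
  linarith

lemma int_bound_gauss (d : ℕ) (F : EuclideanSpace ℝ (Fin d) → ℝ)
    (z : EuclideanSpace ℝ (Fin d)) (C k : ℝ) (hk : 0 < k)
    (hb : ∀ η, ‖F η‖ ≤ C * Real.exp (-(k * ‖η - z‖ ^ 2))) :
    ‖∫ η : EuclideanSpace ℝ (Fin d), F η‖ ≤ C * (Real.pi / k) ^ ((d : ℝ) / 2) := by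
  calc ‖∫ η : EuclideanSpace ℝ (Fin d), F η‖
      ≤ ∫ η : EuclideanSpace ℝ (Fin d), C * Real.exp (-(k * ‖η - z‖ ^ 2)) :=
        norm_integral_le_of_norm_le ((gauss_integrable d hk z).const_mul C) (ae_of_all _ hb)
    _ = C * (Real.pi / k) ^ ((d : ℝ) / 2) := by
        rw [integral_const_mul, gauss_integral d hk z]

lemma intInt_left (a b β : ℝ) (hβ : -1 < β) :
    IntervalIntegrable (fun s => (s - a) ^ β) volume a b := by
  have h := (intervalIntegral.intervalIntegrable_rpow' (a := 0) (b := b - a) hβ).comp_sub_right a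
  simpa using h

lemma intInt_right (a b r : ℝ) (hr : -1 < r) :
    IntervalIntegrable (fun s => (b - s) ^ r) volume a b := by
  have h := (intervalIntegral.intervalIntegrable_rpow' (a := b - a) (b := 0) hr).comp_sub_left b
  simpa using h

lemma int_rpow_left (a b β : ℝ) (hβ : -1 < β) (hβ1 : β + 1 ≠ 0) :
    ∫ s in a..b, (s - a) ^ β = (b - a) ^ (β + 1) / (β + 1) := by
  rw [intervalIntegral.integral_comp_sub_right (fun u => u ^ β) a]
  rw [integral_rpow (Or.inl hβ)]
  simp [Real.zero_rpow hβ1]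

lemma int_rpow_right (a b r : ℝ) (hr : -1 < r) (hr1 : r + 1 ≠ 0) :
    ∫ s in a..b, (b - s) ^ r = (b - a) ^ (r + 1) / (r + 1) := by
  rw [intervalIntegral.integral_comp_sub_left (fun u => u ^ r) b]
  rw [integral_rpow (Or.inl hr)]
  simp [Real.zero_rpow hr1]

set_option maxHeartbeats 1000000 in
theorem stmt_4 (d : ℕ) (hd : 1 ≤ d) (T C₀ c₀ : ℝ) (hT : 0 < T) (hC₀ : 0 < C₀)
    (hc₀ : 0 < c₀) :
    ∀ m : ℕ, 1 ≤ m → ∃ B c : ℝ, 0 < B ∧ 0 < c ∧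
      ∀ (K : EuclideanSpace ℝ (Fin d) → ℝ → EuclideanSpace ℝ (Fin d) → ℝ → ℝ)
        (Km : ℕ → EuclideanSpace ℝ (Fin d) → ℝ → EuclideanSpace ℝ (Fin d) → ℝ → ℝ),
        Measurable (fun p : (EuclideanSpace ℝ (Fin d)) × ℝ ×
            (EuclideanSpace ℝ (Fin d)) × ℝ => K p.1 p.2.1 p.2.2.1 p.2.2.2) →
        (∀ (x ξ : EuclideanSpace ℝ (Fin d)) (τ t : ℝ), 0 ≤ τ → τ < t → t ≤ T →
          |K x t ξ τ| ≤ C₀ * (t - τ) ^ (-((d : ℝ) + 1) / 2) *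
            Real.exp (-c₀ * ‖x - ξ‖ ^ 2 / (t - τ))) →
        (∀ (x ξ : EuclideanSpace ℝ (Fin d)) (t τ : ℝ), Km 1 x t ξ τ = K x t ξ τ) →
        (∀ n : ℕ, 1 ≤ n → ∀ (x ξ : EuclideanSpace ℝ (Fin d)) (t τ : ℝ),
          Km (n + 1) x t ξ τ =
            ∫ s in τ..t, ∫ η : EuclideanSpace ℝ (Fin d), K x t η s * Km n η s ξ τ) →
        ∀ (x ξ : EuclideanSpace ℝ (Fin d)) (τ t : ℝ), 0 ≤ τ → τ < t → t ≤ T →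
          |Km m x t ξ τ| ≤ B * (t - τ) ^ (-((d : ℝ) + 2 - (m : ℝ)) / 2) *
            Real.exp (-c * ‖x - ξ‖ ^ 2 / (t - τ)) := by
  intro m hm
  induction m, hm using Nat.le_induction with
  | base =>
      refine ⟨C₀, c₀, hC₀, hc₀, ?_⟩
      intro K Km hK hKb h1 hrec x ξ τ t hτ hτt htT
      rw [h1]
      have he : -((d : ℝ) + 2 - ((1 : ℕ) : ℝ)) / 2 = -((d : ℝ) + 1) / 2 := by
        push_cast; ring
      rw [he]
      exact hKb x ξ τ t hτ hτt htT
  | succ n hn ih =>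
      obtain ⟨B, c, hB, hc, hKm⟩ := ih
      have hn1 : (1 : ℝ) ≤ (n : ℝ) := by exact_mod_cast hn
      have hπ := Real.pi_pos
      set p : ℝ := -((d : ℝ) + 1) / 2 with hp
      set q : ℝ := -((d : ℝ) + 2 - (n : ℝ)) / 2 with hq
      set β : ℝ := q + (d : ℝ) / 2 with hβdef
      have hβ : -1 < β := by rw [hβdef, hq]; linarith
      have hβ1 : 0 < β + 1 := by linarith
      have hp0 : p ≤ 0 := by
        rw [hp]
        have hd0 : (0:ℝ) ≤ (d:ℝ) := by positivity
        linarith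
      set A₁ : ℝ := C₀ * B * (2 * Real.pi / c) ^ ((d : ℝ) / 2) with hA₁
      set A₂ : ℝ := C₀ * B * (2 * Real.pi / c₀) ^ ((d : ℝ) / 2) with hA₂
      have hA₁0 : 0 < A₁ := by rw [hA₁]; positivity
      have hA₂0 : 0 < A₂ := by rw [hA₂]; positivity
      set c' : ℝ := c₀ * c / (2 * (c₀ + c)) with hc'
      have hc'0 : 0 < c' := by rw [hc']; positivity
      set B' : ℝ := A₁ * (2 : ℝ) ^ (-(p + β + 1)) / (β + 1)
        + A₂ * ((2 : ℝ) ^ (-q) + 1) * 2 with hB'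
      have hB'0 : 0 < B' := by
        rw [hB']
        have h1 : 0 < A₁ * (2 : ℝ) ^ (-(p + β + 1)) / (β + 1) :=
          div_pos (mul_pos hA₁0 (Real.rpow_pos_of_pos two_pos _)) hβ1
        have h2 : 0 < A₂ * ((2 : ℝ) ^ (-q) + 1) * 2 := by positivity
        linarith
      clear_value p q β A₁ A₂ c' B'
      refine ⟨B', c', hB'0, hc'0, ?_⟩
      intro K Km hK hKb h1 hrec x ξ τ t hτ hτt htT
      have hKmB := hKm K Km hK hKb h1 hrec
      rw [hrec n hn x ξ t τ]
      set δ : ℝ := t - τ with hδdef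
      have hδ0 : 0 < δ := by rw [hδdef]; linarith
      set E : ℝ := Real.exp (-c' * ‖x - ξ‖ ^ 2 / δ) with hE
      have hE0 : 0 < E := Real.exp_pos _
      set mid : ℝ := τ + δ / 2 with hmid
      have hτmid : τ < mid := by rw [hmid]; linarith
      have hmidt : mid < t := by rw [hmid, hδdef]; linarith
      set g : ℝ → ℝ := fun s => if s ≤ mid then A₁ * E * (t - s) ^ p * (s - τ) ^ β
        else A₂ * E * (t - s) ^ (-(1:ℝ)/2) * (s - τ) ^ q with hg
      clear_value δ E mid g
      -- inner bound
      have inner : ∀ s ∈ Set.Ioo τ t,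
          ‖∫ η : EuclideanSpace ℝ (Fin d), K x t η s * Km n η s ξ τ‖ ≤ g s := by
        intro s hs
        obtain ⟨hτs, hst⟩ := hs
        have hs0 : 0 ≤ s := le_trans hτ hτs.le
        have hsT : s ≤ T := le_trans hst.le htT
        have hts0 : 0 < t - s := by linarith
        have hsτ0 : 0 < s - τ := by linarith
        have htsδ : t - s ≤ δ := by rw [hδdef]; linarith
        have hsτδ : s - τ ≤ δ := by rw [hδdef]; linarith
        have hcoef0 : 0 ≤ C₀ * B * (t - s) ^ p * (s - τ) ^ q := by
          have := Real.rpow_nonneg hts0.le p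
          have := Real.rpow_nonneg hsτ0.le q
          positivity
        have hprod : ∀ η : EuclideanSpace ℝ (Fin d),
            ‖K x t η s * Km n η s ξ τ‖ ≤ (C₀ * B * (t - s) ^ p * (s - τ) ^ q) *
              (Real.exp (-c₀ * ‖x - η‖ ^ 2 / (t - s)) *
                Real.exp (-c * ‖η - ξ‖ ^ 2 / (s - τ))) := by
          intro η
          have hKbd := hKb x η s t hs0 hst htT
          have hKmd := hKmB η ξ τ s hτ hτs hsT
          rw [Real.norm_eq_abs, abs_mul]
          calc |K x t η s| * |Km n η s ξ τ|
              ≤ (C₀ * (t - s) ^ p * Real.exp (-c₀ * ‖x - η‖ ^ 2 / (t - s))) *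
                (B * (s - τ) ^ q * Real.exp (-c * ‖η - ξ‖ ^ 2 / (s - τ))) := by
                apply mul_le_mul hKbd hKmd (abs_nonneg _)
                exact mul_nonneg (mul_nonneg hC₀.le (Real.rpow_nonneg hts0.le _))
                  (Real.exp_pos _).le
            _ = _ := by ring
        rcases le_or_gt s mid with hsm | hsm
        · -- lower half: keep the ξ-centered Gaussian
          have hk : 0 < c / (2 * (s - τ)) := by positivity
          have hbound : ∀ η : EuclideanSpace ℝ (Fin d), ‖K x t η s * Km n η s ξ τ‖ ≤
              (C₀ * B * (t - s) ^ p * (s - τ) ^ q * E) *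
                Real.exp (-(c / (2 * (s - τ)) * ‖η - ξ‖ ^ 2)) := by
            intro η
            refine (hprod η).trans ?_
            have htri : ‖x - ξ‖ ≤ ‖x - η‖ + ‖η - ξ‖ := by
              have hxi : x - ξ = (x - η) + (η - ξ) := by abel
              rw [hxi]; exact norm_add_le _ _
            have hkey := expo_ineq c₀ c (t - s) (s - τ) δ ‖x - η‖ ‖η - ξ‖ ‖x - ξ‖
              hc₀ hc hts0 hsτ0 htsδ hsτδ (norm_nonneg _) (norm_nonneg _) (norm_nonneg _) htri
            have hexp : Real.exp (-c₀ * ‖x - η‖ ^ 2 / (t - s)) *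
                Real.exp (-c * ‖η - ξ‖ ^ 2 / (s - τ)) ≤
                E * Real.exp (-(c / (2 * (s - τ)) * ‖η - ξ‖ ^ 2)) := by
              rw [← Real.exp_add, hE, ← Real.exp_add]
              apply Real.exp_le_exp.2
              rw [hc']
              ring_nf at hkey ⊢
              linarith
            calc (C₀ * B * (t - s) ^ p * (s - τ) ^ q) *
                (Real.exp (-c₀ * ‖x - η‖ ^ 2 / (t - s)) *
                  Real.exp (-c * ‖η - ξ‖ ^ 2 / (s - τ)))
                ≤ (C₀ * B * (t - s) ^ p * (s - τ) ^ q) *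
                  (E * Real.exp (-(c / (2 * (s - τ)) * ‖η - ξ‖ ^ 2))) :=
                  mul_le_mul_of_nonneg_left hexp hcoef0
              _ = _ := by ring
          have hI := int_bound_gauss d _ ξ (C₀ * B * (t - s) ^ p * (s - τ) ^ q * E)
            (c / (2 * (s - τ))) hk hbound
          refine hI.trans (le_of_eq ?_)
          have hπk : Real.pi / (c / (2 * (s - τ))) = (2 * Real.pi / c) * (s - τ) := by
            field_simp
          rw [hπk, Real.mul_rpow (by positivity) hsτ0.le]
          have hgs : g s = A₁ * E * (t - s) ^ p * (s - τ) ^ β := by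
            rw [hg]; simp only [if_pos hsm]
          rw [hgs, hA₁, hβdef, Real.rpow_add hsτ0]
          ring
        · -- upper half: keep the x-centered Gaussian
          have hk : 0 < c₀ / (2 * (t - s)) := by positivity
          have hbound : ∀ η : EuclideanSpace ℝ (Fin d), ‖K x t η s * Km n η s ξ τ‖ ≤
              (C₀ * B * (t - s) ^ p * (s - τ) ^ q * E) *
                Real.exp (-(c₀ / (2 * (t - s)) * ‖η - x‖ ^ 2)) := by
            intro η
            refine (hprod η).trans ?_
            have htri : ‖x - ξ‖ ≤ ‖η - ξ‖ + ‖x - η‖ := by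
              have hxi : x - ξ = (x - η) + (η - ξ) := by abel
              rw [hxi]
              exact (norm_add_le _ _).trans (by rw [add_comm])
            have hkey := expo_ineq c c₀ (s - τ) (t - s) δ ‖η - ξ‖ ‖x - η‖ ‖x - ξ‖
              hc hc₀ hsτ0 hts0 hsτδ htsδ (norm_nonneg _) (norm_nonneg _) (norm_nonneg _) htri
            have hexp : Real.exp (-c₀ * ‖x - η‖ ^ 2 / (t - s)) *
                Real.exp (-c * ‖η - ξ‖ ^ 2 / (s - τ)) ≤
                E * Real.exp (-(c₀ / (2 * (t - s)) * ‖η - x‖ ^ 2)) := by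
              rw [← Real.exp_add, hE, ← Real.exp_add]
              apply Real.exp_le_exp.2
              rw [hc', norm_sub_rev η x]
              ring_nf at hkey ⊢
              linarith
            calc (C₀ * B * (t - s) ^ p * (s - τ) ^ q) *
                (Real.exp (-c₀ * ‖x - η‖ ^ 2 / (t - s)) *
                  Real.exp (-c * ‖η - ξ‖ ^ 2 / (s - τ)))
                ≤ (C₀ * B * (t - s) ^ p * (s - τ) ^ q) *
                  (E * Real.exp (-(c₀ / (2 * (t - s)) * ‖η - x‖ ^ 2))) :=
                  mul_le_mul_of_nonneg_left hexp hcoef0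
              _ = _ := by ring
          have hI := int_bound_gauss d _ x (C₀ * B * (t - s) ^ p * (s - τ) ^ q * E)
            (c₀ / (2 * (t - s))) hk hbound
          refine hI.trans (le_of_eq ?_)
          have hπk : Real.pi / (c₀ / (2 * (t - s))) = (2 * Real.pi / c₀) * (t - s) := by
            field_simp
          rw [hπk, Real.mul_rpow (by positivity) hts0.le]
          have hgs : g s = A₂ * E * (t - s) ^ (-(1:ℝ)/2) * (s - τ) ^ q := by
            rw [hg]; simp only [if_neg (not_le.2 hsm)]
          have hps : (t - s) ^ p * (t - s) ^ ((d : ℝ) / 2) = (t - s) ^ (-(1:ℝ)/2) := by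
            rw [← Real.rpow_add hts0, hp]
            norm_num
            ring_nf
          rw [hgs, hA₂, ← hps]
          ring
      -- integrability of g on the two halves
      have hcont1 : ContinuousOn (fun s : ℝ => A₁ * E * (t - s) ^ p) (Set.uIcc τ mid) := by
        rw [Set.uIcc_of_le hτmid.le]
        apply continuousOn_const.mul
        apply ContinuousOn.rpow_const (continuousOn_const.sub continuousOn_id)
        intro sx hsx
        left
        have h2 : sx ≤ mid := hsx.2
        simp only [Pi.sub_apply, id_eq]
        exact ne_of_gt (by linarith [hmidt])
      have hφ₁int : IntervalIntegrable (fun s => A₁ * E * (t - s) ^ p * (s - τ) ^ β)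
          volume τ mid := (intInt_left τ mid β hβ).continuousOn_mul hcont1
      have hg1 : IntervalIntegrable g volume τ mid := by
        apply hφ₁int.congr
        intro s hs
        rw [Set.uIoc_of_le hτmid.le] at hs
        rw [hg]; simp only [if_pos hs.2]
      have hcont2 : ContinuousOn (fun s : ℝ => (s - τ) ^ q) (Set.uIcc mid t) := by
        rw [Set.uIcc_of_le hmidt.le]
        apply ContinuousOn.rpow_const (continuousOn_id.sub continuousOn_const)
        intro sx hsx
        left
        have h2 : mid ≤ sx := hsx.1
        simp only [Pi.sub_apply, id_eq]
        exact ne_of_gt (by linarith [hτmid])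
      have hφ₂int : IntervalIntegrable
          (fun s => A₂ * E * (t - s) ^ (-(1:ℝ)/2) * (s - τ) ^ q) volume mid t :=
        ((intInt_right mid t (-(1:ℝ)/2) (by norm_num)).const_mul (A₂ * E)).mul_continuousOn hcont2
      have hg2 : IntervalIntegrable g volume mid t := by
        apply hφ₂int.congr
        intro s hs
        rw [Set.uIoc_of_le hmidt.le] at hs
        rw [hg]; simp only [if_neg (not_le.2 hs.1)]
      have hgint : IntervalIntegrable g volume τ t := hg1.trans hg2
      have hnorm : ‖∫ s in τ..t, ∫ η : EuclideanSpace ℝ (Fin d), K x t η s * Km n η s ξ τ‖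
          ≤ |∫ s in τ..t, g s| := by
        apply intervalIntegral.norm_integral_le_abs_of_norm_le ?_ hgint
        have hne : ∀ᵐ s : ℝ, s ≠ t := by
          rw [ae_iff]
          have h0 : {s : ℝ | ¬s ≠ t} = {t} := by ext u; simp
          rw [h0]
          exact measure_singleton t
        filter_upwards [ae_restrict_mem measurableSet_uIoc, ae_restrict_of_ae hne] with s hs hsne
        rw [Set.uIoc_of_le hτt.le] at hs
        exact inner s ⟨hs.1, lt_of_le_of_ne hs.2 hsne⟩
      -- nonnegativity of g
      have hgnn : ∀ s ∈ Set.Icc τ t, 0 ≤ g s := by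
        intro s hs
        have h1 : (0:ℝ) ≤ t - s := by linarith [hs.2]
        have h2 : (0:ℝ) ≤ s - τ := by linarith [hs.1]
        rw [hg]
        simp only
        split
        · exact mul_nonneg (mul_nonneg (mul_pos hA₁0 hE0).le (Real.rpow_nonneg h1 _))
            (Real.rpow_nonneg h2 _)
        · exact mul_nonneg (mul_nonneg (mul_pos hA₂0 hE0).le (Real.rpow_nonneg h1 _))
            (Real.rpow_nonneg h2 _)
      have hInn1 : 0 ≤ ∫ s in τ..mid, g s :=
        intervalIntegral.integral_nonneg hτmid.le
          (fun u hu => hgnn u ⟨hu.1, le_trans hu.2 hmidt.le⟩)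
      have hInn2 : 0 ≤ ∫ s in mid..t, g s :=
        intervalIntegral.integral_nonneg hmidt.le
          (fun u hu => hgnn u ⟨le_trans hτmid.le hu.1, hu.2⟩)
      have hmidτ : mid - τ = δ / 2 := by rw [hmid]; ring
      have htmid : t - mid = δ / 2 := by rw [hmid, hδdef]; ring
      have hδ2 : (0:ℝ) < δ / 2 := by linarith
      -- piece 1
      have hI1eq : ∫ s in τ..mid, g s
          = ∫ s in τ..mid, A₁ * E * (t - s) ^ p * (s - τ) ^ β := by
        apply intervalIntegral.integral_congr
        intro s hs
        rw [Set.uIcc_of_le hτmid.le] at hs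
        rw [hg]; simp only [if_pos hs.2]
      have hconst1 : IntervalIntegrable (fun s => (A₁ * E * (δ/2) ^ p) * (s - τ) ^ β)
          volume τ mid := (intInt_left τ mid β hβ).const_mul _
      have hI1le : (∫ s in τ..mid, A₁ * E * (t - s) ^ p * (s - τ) ^ β)
          ≤ A₁ * E * (δ/2) ^ p * ((δ/2) ^ (β+1) / (β+1)) := by
        have hmono : ∀ s ∈ Set.Icc τ mid, A₁ * E * (t - s) ^ p * (s - τ) ^ β
            ≤ (A₁ * E * (δ/2) ^ p) * (s - τ) ^ β := by
          intro s hs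
          have hδe : δ = t - τ := hδdef
          have hmide : mid = τ + δ/2 := hmid
          have hs2 : δ/2 ≤ t - s := by linarith [hs.2]
          have h1 : (t - s) ^ p ≤ (δ/2) ^ p :=
            Real.rpow_le_rpow_of_nonpos hδ2 hs2 hp0
          exact mul_le_mul_of_nonneg_right
            (mul_le_mul_of_nonneg_left h1 (mul_pos hA₁0 hE0).le)
            (Real.rpow_nonneg (by linarith [hs.1]) β)
        calc (∫ s in τ..mid, A₁ * E * (t - s) ^ p * (s - τ) ^ β)
            ≤ ∫ s in τ..mid, (A₁ * E * (δ/2) ^ p) * (s - τ) ^ β :=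
              intervalIntegral.integral_mono_on hτmid.le hφ₁int hconst1 hmono
          _ = (A₁ * E * (δ/2) ^ p) * ((mid - τ) ^ (β+1) / (β+1)) := by
              rw [intervalIntegral.integral_const_mul,
                int_rpow_left τ mid β hβ (ne_of_gt hβ1)]
          _ = A₁ * E * (δ/2) ^ p * ((δ/2) ^ (β+1) / (β+1)) := by rw [hmidτ]
      -- piece 2
      have hI2eq : ∫ s in mid..t, g s
          = ∫ s in mid..t, A₂ * E * (t - s) ^ (-(1:ℝ)/2) * (s - τ) ^ q := by
        apply intervalIntegral.integral_congr_ae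
        apply MeasureTheory.ae_of_all
        intro s hs
        rw [Set.uIoc_of_le hmidt.le] at hs
        rw [hg]; simp only [if_neg (not_le.2 hs.1)]
      have hconst2 : IntervalIntegrable
          (fun s => (A₂ * E * (((2:ℝ)^(-q)+1) * δ^q)) * (t - s) ^ (-(1:ℝ)/2)) volume mid t :=
        (intInt_right mid t (-(1:ℝ)/2) (by norm_num)).const_mul _
      have hqb : ∀ s ∈ Set.Icc mid t, (s - τ) ^ q ≤ ((2:ℝ)^(-q)+1) * δ^q := by
        intro s hs
        have hδe : δ = t - τ := hδdef
        have hmide : mid = τ + δ/2 := hmid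
        have hlow : δ/2 ≤ s - τ := by linarith [hs.1]
        have hup : s - τ ≤ δ := by linarith [hs.2]
        have hδq : (0:ℝ) ≤ δ^q := Real.rpow_nonneg hδ0.le q
        rcases le_or_gt 0 q with hq0 | hq0
        · have h1 : (s - τ) ^ q ≤ δ ^ q := Real.rpow_le_rpow (by linarith) hup hq0
          have h2q : (0:ℝ) ≤ (2:ℝ)^(-q) := Real.rpow_nonneg (by norm_num) _
          have h3 : δ ^ q ≤ ((2:ℝ)^(-q)+1) * δ ^ q :=
            le_mul_of_one_le_left hδq (by linarith)
          linarith
        · have h1 : (s - τ) ^ q ≤ (δ/2) ^ q :=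
            Real.rpow_le_rpow_of_nonpos hδ2 hlow hq0.le
          have h2 : (δ/2:ℝ) ^ q = (2:ℝ)^(-q) * δ^q := by
            rw [show (δ/2:ℝ) = δ * (2:ℝ)⁻¹ from by ring,
              Real.mul_rpow hδ0.le (by norm_num),
              Real.inv_rpow (by norm_num : (0:ℝ) ≤ 2),
              ← Real.rpow_neg (by norm_num : (0:ℝ) ≤ 2)]
            ring
          have h3 : (2:ℝ)^(-q) * δ^q ≤ ((2:ℝ)^(-q)+1) * δ^q :=
            mul_le_mul_of_nonneg_right (by linarith) hδq
          linarith [h1, h2.le, h3]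
      have hI2le : (∫ s in mid..t, A₂ * E * (t - s) ^ (-(1:ℝ)/2) * (s - τ) ^ q)
          ≤ (A₂ * E * (((2:ℝ)^(-q)+1) * δ^q)) * ((δ/2) ^ ((-(1:ℝ)/2)+1) / ((-(1:ℝ)/2)+1)) := by
        have hmono : ∀ s ∈ Set.Icc mid t, A₂ * E * (t - s) ^ (-(1:ℝ)/2) * (s - τ) ^ q
            ≤ (A₂ * E * (((2:ℝ)^(-q)+1) * δ^q)) * (t - s) ^ (-(1:ℝ)/2) := by
          intro s hs
          have h0 : (0:ℝ) ≤ (t - s) ^ (-(1:ℝ)/2) :=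
            Real.rpow_nonneg (by linarith [hs.2]) _
          calc A₂ * E * (t - s) ^ (-(1:ℝ)/2) * (s - τ) ^ q
              ≤ (A₂ * E * (t - s) ^ (-(1:ℝ)/2)) * (((2:ℝ)^(-q)+1) * δ^q) :=
                mul_le_mul_of_nonneg_left (hqb s hs)
                  (mul_nonneg (mul_pos hA₂0 hE0).le h0)
            _ = _ := by ring
        calc (∫ s in mid..t, A₂ * E * (t - s) ^ (-(1:ℝ)/2) * (s - τ) ^ q)
            ≤ ∫ s in mid..t, (A₂ * E * (((2:ℝ)^(-q)+1) * δ^q)) * (t - s) ^ (-(1:ℝ)/2) :=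
              intervalIntegral.integral_mono_on hmidt.le hφ₂int hconst2 hmono
          _ = (A₂ * E * (((2:ℝ)^(-q)+1) * δ^q))
              * ((t - mid) ^ ((-(1:ℝ)/2)+1) / ((-(1:ℝ)/2)+1)) := by
              rw [intervalIntegral.integral_const_mul,
                int_rpow_right mid t (-(1:ℝ)/2) (by norm_num) (by norm_num)]
          _ = _ := by rw [htmid]
      -- assembly
      have hsplit : (∫ s in τ..t, g s) = (∫ s in τ..mid, g s) + ∫ s in mid..t, g s :=
        (intervalIntegral.integral_add_adjacent_intervals hg1 hg2).symm
      have e_eq : -((d:ℝ) + 2 - ((n+1 : ℕ):ℝ))/2 = p + β + 1 := by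
        rw [hp, hβdef, hq]; push_cast; ring
      have he2 : ((-(1:ℝ)/2)+1) = (1:ℝ)/2 := by norm_num
      have hhalfle : (δ/2:ℝ)^((1:ℝ)/2) ≤ δ^((1:ℝ)/2) :=
        Real.rpow_le_rpow hδ2.le (by linarith) (by norm_num)
      have t1 : (δ/2:ℝ)^p * (δ/2)^(β+1) = (2:ℝ)^(-(p+β+1)) * δ^(p+β+1) := by
        rw [← Real.rpow_add hδ2]
        rw [show (δ/2:ℝ) = δ * (2:ℝ)⁻¹ from by ring,
          Real.mul_rpow hδ0.le (by norm_num),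
          Real.inv_rpow (by norm_num : (0:ℝ) ≤ 2),
          ← Real.rpow_neg (by norm_num : (0:ℝ) ≤ 2)]
        rw [show p + (β+1) = p + β + 1 from by ring]
        ring
      have t2 : δ^q * δ^((1:ℝ)/2) = δ^(p+β+1) := by
        rw [← Real.rpow_add hδ0]
        congr 1
        rw [hp, hβdef, hq]; ring
      calc |∫ s in τ..t, ∫ η : EuclideanSpace ℝ (Fin d), K x t η s * Km n η s ξ τ|
          = ‖∫ s in τ..t, ∫ η : EuclideanSpace ℝ (Fin d), K x t η s * Km n η s ξ τ‖ :=
            (Real.norm_eq_abs _).symm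
        _ ≤ |∫ s in τ..t, g s| := hnorm
        _ = (∫ s in τ..mid, g s) + ∫ s in mid..t, g s := by
            rw [hsplit, abs_of_nonneg (by linarith)]
        _ ≤ A₁ * E * (δ/2) ^ p * ((δ/2) ^ (β+1) / (β+1))
            + (A₂ * E * (((2:ℝ)^(-q)+1) * δ^q)) * ((δ/2) ^ ((-(1:ℝ)/2)+1) / ((-(1:ℝ)/2)+1)) :=
            add_le_add (le_trans (le_of_eq hI1eq) hI1le) (le_trans (le_of_eq hI2eq) hI2le)
        _ ≤ B' * δ ^ (p + β + 1) * E := by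
            rw [he2]
            have hnn2 : (0:ℝ) ≤ A₂ * E * (((2:ℝ)^(-q)+1) * δ^q) :=
              mul_nonneg (mul_pos hA₂0 hE0).le
                (mul_nonneg (by positivity) (Real.rpow_nonneg hδ0.le q))
            calc A₁ * E * (δ/2) ^ p * ((δ/2) ^ (β+1) / (β+1))
                + (A₂ * E * (((2:ℝ)^(-q)+1) * δ^q)) * ((δ/2) ^ ((1:ℝ)/2) / ((1:ℝ)/2))
                ≤ A₁ * E * (δ/2) ^ p * ((δ/2) ^ (β+1) / (β+1))
                  + (A₂ * E * (((2:ℝ)^(-q)+1) * δ^q)) * (δ ^ ((1:ℝ)/2) / ((1:ℝ)/2)) := by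
                  apply add_le_add le_rfl
                  refine mul_le_mul_of_nonneg_left ?_ hnn2
                  rw [show ((δ/2:ℝ) ^ ((1:ℝ)/2) / ((1:ℝ)/2)) = 2 * (δ/2) ^ ((1:ℝ)/2) from by ring,
                    show (δ ^ ((1:ℝ)/2) / ((1:ℝ)/2)) = 2 * δ ^ ((1:ℝ)/2) from by ring]
                  exact mul_le_mul_of_nonneg_left hhalfle (by norm_num)
              _ = B' * δ ^ (p + β + 1) * E := by
                  rw [hB']
                  linear_combination (A₁ * E / (β+1)) * t1
                    + (A₂ * E * ((2:ℝ)^(-q)+1) * 2) * t2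
        _ = B' * δ ^ (-((d:ℝ) + 2 - ((n+1 : ℕ):ℝ))/2) * E := by rw [e_eq]
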